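/- Claim 4.7 (every successful forest contains a well-spread sequence): Let C ⊆ Σ₁ × ⋯ × Σₙ be an (ℓ,L,t)-list recoverable code with t ≤ n. Let F = {T⁽¹⁾,…,T⁽ᵐ⁾} be a forest of valid decision trees, each of depth at most q, which (L+1)-succeeds on an oracle O : Σ → {0,1}, and let r ≥ 1 satisfy (r−1)·q ≤ ℓ. Then there exist indices i₁,…,i_r ∈ {1,…,m} such that the sequence T⁽ⁱ¹⁾,…,T⁽ⁱʳ⁾ is t-well-spread on O and outputs r distinct elements of C_O (i.e., r-succeeds on O). -/
import Mathlib


open Finset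
open scoped Classical

/-- A decision tree over symbols `σ` with outputs in `β`: each internal node queries a symbol
and branches on the answer bit, each leaf outputs an element of `β`. -/
inductive DTree (σ β : Type) : Type where
  | leaf : β → DTree σ β
  | node : σ → DTree σ β → DTree σ β → DTree σ β

namespace DTree

variable {σ β : Type}

/-- `T(O)`: the output of `T` when run on the oracle `O`. -/
def eval : DTree σ β → (σ → Bool) → β
  | .leaf b, _ => b
  | .node s t0 t1, O => if O s then eval t1 O else eval t0 O

/-- The depth of a tree: the maximum number of queries along any root-to-leaf path. -/
def depth : DTree σ β → ℕ
  | .leaf _ => 0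
  | .node _ t0 t1 => max (depth t0) (depth t1) + 1

/-- `path(T, O)`: the set of symbols queried by `T` when run on the oracle `O`. -/
def path [DecidableEq σ] : DTree σ β → (σ → Bool) → Finset σ
  | .leaf _, _ => ∅
  | .node s t0 t1, O => insert s (if O s then path t1 O else path t0 O)

end DTree

variable {Sym : Type}

/-- The set of symbols `{c₁, …, cₙ}` of a word `c`. -/
def symbSet {n : ℕ} [DecidableEq Sym] (c : Fin n → Sym) : Finset Sym :=
  Finset.univ.image c

/-- `c` is `t`-queried by `S` if `|{c₁,…,cₙ} ∩ S| ≥ t`. -/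
def tQueried {n : ℕ} [DecidableEq Sym] (t : ℕ) (S : Finset Sym) (c : Fin n → Sym) : Prop :=
  t ≤ (symbSet c ∩ S).card

/-- `C` is `(ℓ, L, t)`-list recoverable: for every set `S` of at most `ℓ` symbols,
`|C[S,t]| ≤ L`. -/
def listRecoverable {n : ℕ} [DecidableEq Sym] (C : Finset (Fin n → Sym))
    (l L t : ℕ) : Prop :=
  ∀ S : Finset Sym, S.card ≤ l → (C.filter fun c => tQueried t S c).card ≤ L

/-- `C_O := {c ∈ C : O(c₁) = ⋯ = O(cₙ) = 0}`. -/
def codeZero {n : ℕ} [DecidableEq Sym] (C : Finset (Fin n → Sym)) (O : Sym → Bool) :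
    Finset (Fin n → Sym) :=
  C.filter fun c => ∀ i, O (c i) = false

/-- A tree is valid if, on every oracle, every coordinate of its output is queried. -/
def DTree.Valid {n : ℕ} [DecidableEq Sym] (T : DTree Sym (Fin n → Sym)) : Prop :=
  ∀ O : Sym → Bool, ∀ i : Fin n, T.eval O i ∈ T.path O

/-- Probability of an event under a uniformly random oracle `O : Σ → {0,1}`. -/
noncomputable def prOracle [Fintype Sym] (p : (Sym → Bool) → Prop) : ℝ :=
  ((Finset.univ.filter fun O : Sym → Bool => p O).card : ℝ) / (Fintype.card (Sym → Bool))

/-- A sequence of trees `T⁽¹⁾,…,T⁽ʳ⁾` is `t`-well-spread on `O` if for each `i`, the output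
`T⁽ⁱ⁺¹⁾(O)` is not `t`-queried by `S_i := ∪_{j ≤ i} path(T⁽ʲ⁾,O)`, the set of symbols queried
by the preceding trees. -/
def wellSpread {n r : ℕ} [DecidableEq Sym] (t : ℕ)
    (T : Fin r → DTree Sym (Fin n → Sym)) (O : Sym → Bool) : Prop :=
  ∀ i : Fin r, ¬ tQueried t ((Finset.Iio i).biUnion fun j => (T j).path O) ((T i).eval O)

/-- **Claim 4.7 (every successful forest contains a well-spread sequence).** If a forest
`F = {T⁽¹⁾,…,T⁽ᵐ⁾}` of valid depth-`≤ q` trees `(L+1)`-succeeds on an oracle `O`, and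
`r ≥ 1` satisfies `(r−1)·q ≤ ℓ`, then there are indices `i₁,…,i_r ∈ [m]` such that the
sequence `T⁽ⁱ¹⁾,…,T⁽ⁱʳ⁾` is `t`-well-spread on `O` and outputs `r` distinct elements
of `C_O`. -/
lemma DTree.path_card_le_depth {σ β : Type} [DecidableEq σ]
    (T : DTree σ β) (O : σ → Bool) : (T.path O).card ≤ T.depth := by
  induction T with
  | leaf b => simp [DTree.path, DTree.depth]
  | node s t0 t1 ih0 ih1 =>
    simp only [DTree.path, DTree.depth]
    by_cases h : O s <;> simp only [h, if_true, if_false]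
    · exact le_trans (Finset.card_insert_le _ _)
        (Nat.succ_le_succ (le_trans ih1 (le_max_right _ _)))
    · exact le_trans (Finset.card_insert_le _ _)
        (Nat.succ_le_succ (le_trans ih0 (le_max_left _ _)))

theorem successful_forest_has_wellspread_sequence
    {n : ℕ} (hn : 1 ≤ n) [Fintype Sym] [DecidableEq Sym]
    (A : Fin n → Finset Sym)
    (hdisj : ∀ i j : Fin n, i ≠ j → Disjoint (A i) (A j))
    (C : Finset (Fin n → Sym)) (hC : ∀ c ∈ C, ∀ i, c i ∈ A i)
    (l L t q m r : ℕ) (ht : t ≤ n) (hr : 1 ≤ r) (hrq : (r - 1) * q ≤ l)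
    (hLR : listRecoverable C l L t)
    (T : Fin m → DTree Sym (Fin n → Sym))
    (hvalid : ∀ j, (T j).Valid)
    (hdepth : ∀ j, (T j).depth ≤ q)
    (O : Sym → Bool)
    (hsucc : L + 1 ≤ ((Finset.univ.image fun j => (T j).eval O) ∩ codeZero C O).card) :
    ∃ idx : Fin r → Fin m,
      wellSpread t (fun j => T (idx j)) O ∧
        r ≤ ((Finset.univ.image fun j : Fin r => (T (idx j)).eval O) ∩ codeZero C O).card := by
  set E := (Finset.univ.image fun j => (T j).eval O) ∩ codeZero C O with hE
  -- E is nonempty, so m ≥ 1; get some j₀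
  have hEne : E.Nonempty := Finset.card_pos.mp (by omega)
  obtain ⟨c0, hc0⟩ := hEne
  obtain ⟨j0, _, hj0⟩ := Finset.mem_image.mp (Finset.mem_of_mem_inter_left hc0)
  -- codewords are injective
  have hcinj : ∀ c ∈ C, Function.Injective c := by
    intro c hc a b hab
    by_contra hne
    exact (Finset.disjoint_left.mp (hdisj a b hne) (hC c hc a)) (hab ▸ hC c hc b)
  have hsymb : ∀ c ∈ C, (symbSet c).card = n := by
    intro c hc
    rw [symbSet, Finset.card_image_of_injective _ (hcinj c hc), Finset.card_univ,
      Fintype.card_fin]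
  have aux : ∀ k, k ≤ r → ∃ f : ℕ → Fin m,
      (∀ i < k, (T (f i)).eval O ∈ codeZero C O) ∧
      (∀ i < k, ∀ j < k, i ≠ j → (T (f i)).eval O ≠ (T (f j)).eval O) ∧
      (∀ i < k, ¬ tQueried t ((Finset.range i).biUnion fun j => (T (f j)).path O)
        ((T (f i)).eval O)) := by
    intro k
    induction k with
    | zero => intro _; exact ⟨fun _ => j0, by omega, by omega, by omega⟩
    | succ k ih =>
      intro hk
      obtain ⟨f, h1, h2, h3⟩ := ih (by omega)
      set S := (Finset.range k).biUnion fun j => (T (f j)).path O with hS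
      have hScard : S.card ≤ l := by
        calc S.card ≤ ∑ j ∈ Finset.range k, ((T (f j)).path O).card :=
              Finset.card_biUnion_le
          _ ≤ ∑ _j ∈ Finset.range k, q := Finset.sum_le_sum fun j _ =>
              le_trans (DTree.path_card_le_depth _ O) (hdepth (f j))
          _ = k * q := by simp [Finset.sum_const, Finset.card_range]
          _ ≤ (r - 1) * q := Nat.mul_le_mul_right q (by omega)
          _ ≤ l := hrq
      set B := C.filter fun c => tQueried t S c with hBdef
      have hBcard : B.card ≤ L := hLR S hScard
      have hprevB : ∀ i < k, (T (f i)).eval O ∈ B := by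
        intro i hi
        have hcz := h1 i hi
        have hcC : (T (f i)).eval O ∈ C := Finset.mem_of_mem_filter _ hcz
        refine Finset.mem_filter.mpr ⟨hcC, ?_⟩
        have hsub : symbSet ((T (f i)).eval O) ⊆ S := by
          intro s hs
          obtain ⟨a, _, rfl⟩ := Finset.mem_image.mp hs
          exact Finset.mem_biUnion.mpr ⟨i, Finset.mem_range.mpr hi, hvalid (f i) O a⟩
        unfold tQueried
        rw [Finset.inter_eq_left.mpr hsub, hsymb _ hcC]
        exact ht
      -- find a fresh element of E not in B
      have hnotsub : ¬ E ⊆ B := by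
        intro hsub
        have := Finset.card_le_card hsub
        omega
      obtain ⟨c, hcE, hcB⟩ := Finset.not_subset.mp hnotsub
      obtain ⟨j, _, hj⟩ := Finset.mem_image.mp (Finset.mem_of_mem_inter_left hcE)
      have hccz : c ∈ codeZero C O := Finset.mem_of_mem_inter_right hcE
      set g : ℕ → Fin m := fun i => if i = k then j else f i with hg
      have hgk : g k = j := if_pos rfl
      have hglt : ∀ a, a ≠ k → g a = f a := fun a ha => if_neg ha
      refine ⟨g, ?_, ?_, ?_⟩
      · intro i hi
        by_cases hik : i = k
        · subst hik; rw [hgk, hj]; exact hccz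
        · rw [hglt i hik]; exact h1 i (by omega)
      · intro i hi j' hj' hne
        by_cases hik : i = k <;> by_cases hjk : j' = k
        · omega
        · subst hik
          rw [hgk, hj, hglt j' hjk]
          intro heq
          exact hcB (heq ▸ hprevB j' (by omega))
        · subst hjk
          rw [hgk, hj, hglt i hik]
          intro heq
          exact hcB (heq ▸ hprevB i (by omega))
        · rw [hglt i hik, hglt j' hjk]
          exact h2 i (by omega) j' (by omega) hne
      · intro i hi
        have hrange : ∀ a ∈ Finset.range i,
            (T (g a)).path O = (T (f a)).path O := by
          intro a ha
          have hai : a < i := Finset.mem_range.mp ha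
          rw [hglt a (by omega)]
        rw [Finset.biUnion_congr rfl hrange]
        by_cases hik : i = k
        · subst hik
          rw [hgk, hj, ← hS]
          intro htq
          exact hcB (Finset.mem_filter.mpr ⟨Finset.mem_of_mem_filter _ hccz, htq⟩)
        · rw [hglt i hik]
          exact h3 i (by omega)
  obtain ⟨f, h1, h2, h3⟩ := aux r le_rfl
  refine ⟨fun i => f i.val, ?_, ?_⟩
  · intro i
    have hset : ((Finset.Iio i).biUnion fun j : Fin r => (T (f j.val)).path O)
        = (Finset.range i.val).biUnion fun j => (T (f j)).path O := by
      ext s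
      simp only [Finset.mem_biUnion, Finset.mem_Iio, Finset.mem_range]
      constructor
      · rintro ⟨j, hji, hs⟩; exact ⟨j.val, hji, hs⟩
      · rintro ⟨j', hj', hs⟩; exact ⟨⟨j', lt_trans hj' i.isLt⟩, hj', hs⟩
    simpa [hset] using h3 i.val i.isLt
  · have hinj : Function.Injective fun i : Fin r => (T (f i.val)).eval O := by
      intro a b hab
      by_contra hne
      exact h2 a.val a.isLt b.val b.isLt (fun h => hne (Fin.ext h)) hab
    have hsub : (Finset.univ.image fun i : Fin r => (T (f i.val)).eval O) ⊆ codeZero C O := by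
      intro c hc
      obtain ⟨i, _, rfl⟩ := Finset.mem_image.mp hc
      exact h1 i.val i.isLt
    rw [Finset.inter_eq_left.mpr hsub,
      Finset.card_image_of_injective _ hinj, Finset.card_univ, Fintype.card_fin]
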